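/- If a nonnegative integrable function ρ on [0,1]² is an invariant density for F, then the functions (x,y) ↦ ρ(y,x) and (x,y) ↦ ρ(1-y, 1-x) are also invariant densities for F. -/

import Mathlib

open Set MeasureTheory

open scoped NNReal

/-- Image of a null set under a Lipschitz map `ℝ → ℝ` is null. -/
lemma lip_image_null' {K : ℝ≥0} {g : ℝ → ℝ} (hg : LipschitzWith K g) {A : Set ℝ}
    (hA : volume A = 0) : volume (g '' A) = 0 := by
  have h := hg.hausdorffMeasure_image_le (by norm_num : (0:ℝ) ≤ 1) A
  rw [hausdorffMeasure_real] at h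
  rw [hA, mul_zero] at h
  exact le_antisymm h zero_le

lemma map_restrict_ac' {f g : ℝ → ℝ} {K : ℝ≥0} (hf : Measurable f) (hg : LipschitzWith K g)
    {s : Set ℝ} (hs : MeasurableSet s) (hgf : ∀ x ∈ s, g (f x) = x) :
    (volume.restrict s).map f ≪ volume := by
  refine Measure.AbsolutelyContinuous.mk (fun A hA hA0 => ?_)
  rw [Measure.map_apply hf hA, Measure.restrict_apply' hs]
  refine measure_mono_null (fun x hx => ?_) (lip_image_null' hg hA0)
  exact ⟨f x, hx.1, hgf x hx.2⟩

lemma badset_null' {u v : ℝ → ℝ} (hu : Measurable u) (hv : Measurable v)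
    {s t : Set ℝ} (hs : MeasurableSet s) (ht : MeasurableSet t)
    (hus : (volume.restrict s).map u ≪ volume)
    (hvt : (volume.restrict t).map v ≪ volume)
    {N : Set (ℝ × ℝ)} (hN : MeasurableSet N) (hN0 : volume N = 0) :
    volume ({p : ℝ × ℝ | (u p.2, v p.1) ∈ N} ∩ t ×ˢ s) = 0 := by
  have hT : Measurable (fun p : ℝ × ℝ => (u p.2, v p.1)) :=
    (hu.comp measurable_snd).prodMk (hv.comp measurable_fst)
  have key : (volume : Measure (ℝ × ℝ)).restrict (t ×ˢ s) {p : ℝ × ℝ | (u p.2, v p.1) ∈ N} = 0 := by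
    have h1 : (volume : Measure (ℝ × ℝ)).restrict (t ×ˢ s)
        = (volume.restrict t).prod (volume.restrict s) := by
      rw [Measure.prod_restrict, ← Measure.volume_eq_prod]
    have h2 : {p : ℝ × ℝ | (u p.2, v p.1) ∈ N} = (fun p : ℝ × ℝ => (u p.2, v p.1)) ⁻¹' N := rfl
    rw [h1, h2, ← Measure.map_apply hT hN]
    have h3 : Measure.map (fun p : ℝ × ℝ => (u p.2, v p.1))
          ((volume.restrict t).prod (volume.restrict s))
        = ((volume.restrict s).map u).prod ((volume.restrict t).map v) := by
      have h4 : (fun p : ℝ × ℝ => (u p.2, v p.1)) = (Prod.map u v) ∘ Prod.swap := rfl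
      rw [h4, ← Measure.map_map (hu.prodMap hv) measurable_swap, Measure.prod_swap,
        Measure.map_prod_map _ _ hu hv]
    rw [h3]
    refine (hus.prod hvt) ?_
    rw [← Measure.volume_eq_prod]
    exact hN0
  rw [Measure.restrict_apply' (ht.prod hs)] at key
  exact key

lemma hline_null' (c : ℝ) : volume {p : ℝ × ℝ | p.2 = c} = 0 := by
  have h : {p : ℝ × ℝ | p.2 = c} = (univ : Set ℝ) ×ˢ ({c} : Set ℝ) := by
    ext p
    constructor
    · intro hp; exact ⟨mem_univ _, hp⟩
    · intro hp; exact hp.2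
  rw [h, Measure.volume_eq_prod, Measure.prod_prod]
  simp

lemma vline_null' (c : ℝ) : volume {p : ℝ × ℝ | p.1 = c} = 0 := by
  have h : {p : ℝ × ℝ | p.1 = c} = ({c} : Set ℝ) ×ˢ (univ : Set ℝ) := by
    ext p
    constructor
    · intro hp; exact ⟨hp, mem_univ _⟩
    · intro hp; exact hp.1
  rw [h, Measure.volume_eq_prod, Measure.prod_prod]
  simp

lemma clamp_lip' {f : ℝ → ℝ} {a b C : ℝ} (hab : a ≤ b) (hC : 0 ≤ C)
    (hf : ∀ x ∈ Icc a b, ∀ y ∈ Icc a b, |f x - f y| ≤ C * |x - y|) :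
    LipschitzWith ⟨C, hC⟩ (fun x => f (projIcc a b hab x : ℝ)) := by
  refine LipschitzWith.of_dist_le_mul (fun x y => ?_)
  have h1 := hf _ (projIcc a b hab x).2 _ (projIcc a b hab y).2
  have h2 : dist ((projIcc a b hab x : ℝ)) ((projIcc a b hab y : ℝ)) ≤ dist x y := by
    have := (LipschitzWith.projIcc hab).dist_le_mul x y
    rwa [Subtype.dist_eq, NNReal.coe_one, one_mul] at this
  calc dist (f (projIcc a b hab x : ℝ)) (f (projIcc a b hab y : ℝ))
      ≤ C * dist ((projIcc a b hab x : ℝ)) ((projIcc a b hab y : ℝ)) := by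
        rw [Real.dist_eq, Real.dist_eq]; exact h1
    _ ≤ C * dist x y := mul_le_mul_of_nonneg_left h2 hC

lemma cancel_aux' {a b : ℝ} (X : ℝ) (ha : a ≠ 0) (hb : b ≠ 0) :
    X = b⁻¹ * a * (a⁻¹ * b * X) := by
  have h1 : a * a⁻¹ = 1 := mul_inv_cancel₀ ha
  have h2 : b⁻¹ * b = 1 := inv_mul_cancel₀ hb
  calc X = (b⁻¹ * b) * ((a * a⁻¹) * X) := by rw [h1, h2]; ring
    _ = b⁻¹ * a * (a⁻¹ * b * X) := by ring


/-- A nonnegative integrable function `ρ` on `[0,1]²` is an *invariant density* for the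
triangular map `F` built from `f₀, f₁, g₀, g₁` if it satisfies the Perron–Frobenius
fixed-point equation almost everywhere on the square. -/
def IsInvariantDensity (f₀ f₁ g₀ g₁ : ℝ → ℝ) (ρ : ℝ × ℝ → ℝ) : Prop :=
  (∀ p ∈ Set.Icc (0:ℝ) 1 ×ˢ Set.Icc (0:ℝ) 1, 0 ≤ ρ p) ∧
  MeasureTheory.IntegrableOn ρ (Set.Icc 0 1 ×ˢ Set.Icc 0 1) ∧
  (∀ᵐ p ∂(MeasureTheory.volume.restrict (Set.Icc (0:ℝ) 1 ×ˢ Set.Icc (0:ℝ) 1)),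
    (p.2 < 1/2 → ρ p = deriv g₀ p.1 * deriv f₀ p.2 * ρ (g₀ p.1, f₀ p.2)) ∧
    (1/2 ≤ p.2 → ρ p = deriv g₁ p.1 * deriv f₁ p.2 * ρ (g₁ p.1, f₁ p.2)))

/-- If `ρ` is an invariant density for `F`, then so are
`(x,y) ↦ ρ(y,x)` and `(x,y) ↦ ρ(1-y,1-x)`. -/
theorem invariant_density_time_reversal_symmetry
    (α : ℝ) (hα : 1 < α)
    (f₀ f₁ g₀ g₁ : ℝ → ℝ)
    (hf₀C : ContDiffOn ℝ 2 f₀ (Icc 0 (1/2)))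
    (hf₀0 : f₀ 0 = 0) (hf₀half : f₀ (1/2) = 1)
    (hf₀deriv : ∀ x ∈ Icc (0:ℝ) (1/2), α ≤ deriv f₀ x)
    (hf₀maps : MapsTo f₀ (Icc 0 (1/2)) (Icc 0 1))
    (hf₁ : ∀ x, f₁ x = 1 - f₀ (1 - x))
    (hg₀maps : MapsTo g₀ (Icc 0 1) (Icc 0 (1/2)))
    (hg₁maps : MapsTo g₁ (Icc 0 1) (Icc (1/2) 1))
    (hg₀left : ∀ x ∈ Icc (0:ℝ) (1/2), g₀ (f₀ x) = x)
    (hg₀right : ∀ y ∈ Icc (0:ℝ) 1, f₀ (g₀ y) = y)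
    (hg₁left : ∀ x ∈ Icc (1/2:ℝ) 1, g₁ (f₁ x) = x)
    (hg₁right : ∀ y ∈ Icc (0:ℝ) 1, f₁ (g₁ y) = y)
    (ρ : ℝ × ℝ → ℝ)
    (hρ : IsInvariantDensity f₀ f₁ g₀ g₁ ρ) :
    IsInvariantDensity f₀ f₁ g₀ g₁ (fun p => ρ (p.2, p.1)) ∧
      IsInvariantDensity f₀ f₁ g₀ g₁ (fun p => ρ (1 - p.2, 1 - p.1)) := by
  obtain ⟨hρpos, hρint, hρae⟩ := hρ
  have hα0 : (0:ℝ) < α := by linarith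
  -- ## Differentiability of f₀ everywhere on [0, 1/2]
  have hIud : UniqueDiffOn ℝ (Icc (0:ℝ) (1/2)) := uniqueDiffOn_Icc (by norm_num)
  have hd0 : ∀ x ∈ Icc (0:ℝ) (1/2), HasDerivAt f₀ (deriv f₀ x) x := by
    intro x hx
    have hdiff : DifferentiableAt ℝ f₀ x := by
      by_contra h
      have h2 := hf₀deriv x hx
      rw [deriv_zero_of_not_differentiableAt h] at h2
      linarith
    exact hdiff.hasDerivAt
  have hposd : ∀ x ∈ Icc (0:ℝ) (1/2), 0 < deriv f₀ x := fun x hx =>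
    lt_of_lt_of_le (by linarith) (hf₀deriv x hx)
  have hcont : ContinuousOn f₀ (Icc (0:ℝ) (1/2)) := fun x hx =>
    ((hd0 x hx).differentiableAt.continuousAt).continuousWithinAt
  have hdiffon : DifferentiableOn ℝ f₀ (interior (Icc (0:ℝ) (1/2))) := fun x hx =>
    ((hd0 x (interior_subset hx)).differentiableAt).differentiableWithinAt
  have hlow : ∀ x ∈ Icc (0:ℝ) (1/2), ∀ y ∈ Icc (0:ℝ) (1/2), x ≤ y →
      α * (y - x) ≤ f₀ y - f₀ x :=
    (convex_Icc _ _).mul_sub_le_image_sub_of_le_deriv hcont hdiffon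
      (fun x hx => hf₀deriv x (interior_subset hx))
  -- ## Upper bound on deriv f₀
  have hderivcont : ContinuousOn (deriv f₀) (Icc (0:ℝ) (1/2)) := by
    have h1 : ContinuousOn (derivWithin f₀ (Icc (0:ℝ) (1/2))) (Icc (0:ℝ) (1/2)) :=
      hf₀C.continuousOn_derivWithin hIud (by norm_num)
    exact h1.congr (fun x hx => ((hd0 x hx).differentiableAt.derivWithin (hIud x hx)).symm)
  obtain ⟨M, hM⟩ := isCompact_Icc.exists_bound_of_continuousOn hderivcont
  have hM0 : 0 ≤ M := le_trans (norm_nonneg _) (hM 0 ⟨le_refl _, by norm_num⟩)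
  have hup : ∀ x ∈ Icc (0:ℝ) (1/2), ∀ y ∈ Icc (0:ℝ) (1/2), x ≤ y →
      f₀ y - f₀ x ≤ M * (y - x) :=
    (convex_Icc _ _).image_sub_le_mul_sub_of_deriv_le hcont hdiffon
      (fun x hx => le_trans (le_abs_self _)
        (by rw [← Real.norm_eq_abs]; exact hM x (interior_subset hx)))
  have hf0bd : ∀ x ∈ Icc (0:ℝ) (1/2), ∀ y ∈ Icc (0:ℝ) (1/2), |f₀ x - f₀ y| ≤ M * |x - y| := by
    intro x hx y hy
    rcases le_total x y with h | h
    · have h1 := hlow x hx y hy h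
      have h2 := hup x hx y hy h
      have h3 : 0 ≤ f₀ y - f₀ x := le_trans (mul_nonneg (by linarith) (by linarith)) h1
      rw [abs_of_nonpos (by linarith : f₀ x - f₀ y ≤ 0), abs_of_nonpos (by linarith : x - y ≤ 0)]
      linarith
    · have h1 := hlow y hy x hx h
      have h2 := hup y hy x hx h
      have h3 : 0 ≤ f₀ x - f₀ y := le_trans (mul_nonneg (by linarith) (by linarith)) h1
      rw [abs_of_nonneg h3, abs_of_nonneg (by linarith : (0:ℝ) ≤ x - y)]
      linarith
  -- ## g₀ facts
  have hαinv : (0:ℝ) ≤ α⁻¹ := inv_nonneg.mpr (by linarith)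
  have hg0mem : ∀ x ∈ Icc (0:ℝ) 1, g₀ x ∈ Icc (0:ℝ) (1/2) := fun x hx => hg₀maps hx
  have hg0bd : ∀ x ∈ Icc (0:ℝ) 1, ∀ y ∈ Icc (0:ℝ) 1, |g₀ x - g₀ y| ≤ α⁻¹ * |x - y| := by
    have key : ∀ x ∈ Icc (0:ℝ) 1, ∀ y ∈ Icc (0:ℝ) 1, g₀ x ≤ g₀ y →
        |g₀ x - g₀ y| ≤ α⁻¹ * |x - y| := by
      intro x hx y hy h
      have h1 := hlow _ (hg0mem x hx) _ (hg0mem y hy) h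
      rw [hg₀right x hx, hg₀right y hy] at h1
      have h2 : g₀ y - g₀ x ≤ α⁻¹ * (y - x) := by
        have h3 := mul_le_mul_of_nonneg_left h1 hαinv
        rwa [← mul_assoc, inv_mul_cancel₀ (ne_of_gt hα0), one_mul] at h3
      have h4 : 0 ≤ y - x := le_trans (mul_nonneg (by linarith) (by linarith)) h1
      rw [abs_of_nonpos (by linarith : g₀ x - g₀ y ≤ 0),
        abs_of_nonpos (by linarith : x - y ≤ 0)]
      linarith
    intro x hx y hy
    rcases le_total (g₀ x) (g₀ y) with h | h
    · exact key x hx y hy h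
    · rw [abs_sub_comm, abs_sub_comm x y]; exact key y hy x hx h
  have hg0cont : ContinuousOn g₀ (Icc (0:ℝ) 1) := by
    refine (LipschitzOnWith.of_dist_le_mul (K := ⟨α⁻¹, hαinv⟩) ?_).continuousOn
    intro x hx y hy
    rw [Real.dist_eq, Real.dist_eq]
    exact hg0bd x hx y hy
  -- ## special values
  have h02 : (0:ℝ) ∈ Icc (0:ℝ) (1/2) := ⟨le_refl _, by norm_num⟩
  have hh2 : (1/2:ℝ) ∈ Icc (0:ℝ) (1/2) := ⟨by norm_num, le_refl _⟩
  have hhalf1 : (1/2:ℝ) ∈ Icc (1/2:ℝ) 1 := ⟨le_refl _, by norm_num⟩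
  have hone1 : (1:ℝ) ∈ Icc (1/2:ℝ) 1 := ⟨by norm_num, le_refl _⟩
  have hg00 : g₀ 0 = 0 := by have h := hg₀left 0 h02; rwa [hf₀0] at h
  have hg01 : g₀ 1 = 1/2 := by have h := hg₀left (1/2) hh2; rwa [hf₀half] at h
  have hf1half : f₁ (1/2) = 0 := by
    have h : (1:ℝ) - 1/2 = 1/2 := by norm_num
    rw [hf₁, h, hf₀half]; ring
  have hf1one : f₁ 1 = 1 := by
    have h : (1:ℝ) - 1 = 0 := by norm_num
    rw [hf₁, h, hf₀0]; ring
  have hg10 : g₁ 0 = 1/2 := by have h := hg₁left _ hhalf1; rwa [hf1half] at h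
  have hg11 : g₁ 1 = 1 := by have h := hg₁left _ hone1; rwa [hf1one] at h
  -- ## f₁ facts
  have hmem10 : ∀ t ∈ Icc (1/2:ℝ) 1, (1 - t) ∈ Icc (0:ℝ) (1/2) := fun t ht =>
    ⟨by linarith [ht.2], by linarith [ht.1]⟩
  have hf1eq : f₁ = fun x => 1 - f₀ (1 - x) := funext hf₁
  have hd1 : ∀ t ∈ Icc (1/2:ℝ) 1, HasDerivAt f₁ (deriv f₀ (1 - t)) t := by
    intro t ht
    have h1 := hd0 _ (hmem10 t ht)
    have h2 : HasDerivAt (fun x : ℝ => 1 - x) (-1) t := by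
      simpa using (hasDerivAt_id t).const_sub 1
    have h3 := h1.comp t h2
    have h4 := h3.const_sub 1
    rw [hf1eq]
    exact h4.congr_deriv (by ring)
  have hf1deriv : ∀ t ∈ Icc (1/2:ℝ) 1, deriv f₁ t = deriv f₀ (1 - t) := fun t ht =>
    (hd1 t ht).deriv
  have hf1dge : ∀ t ∈ Icc (1/2:ℝ) 1, α ≤ deriv f₁ t := fun t ht => by
    rw [hf1deriv t ht]; exact hf₀deriv _ (hmem10 t ht)
  have hf1pos : ∀ t ∈ Icc (1/2:ℝ) 1, 0 < deriv f₁ t := fun t ht =>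
    lt_of_lt_of_le hα0 (hf1dge t ht)
  have hf₁maps : ∀ x ∈ Icc (1/2:ℝ) 1, f₁ x ∈ Icc (0:ℝ) 1 := by
    intro x hx
    have h := hf₀maps (hmem10 x hx)
    rw [hf₁]
    exact ⟨by linarith [h.2], by linarith [h.1]⟩
  have hf1bd : ∀ x ∈ Icc (1/2:ℝ) 1, ∀ y ∈ Icc (1/2:ℝ) 1, |f₁ x - f₁ y| ≤ M * |x - y| := by
    intro x hx y hy
    rw [hf₁ x, hf₁ y]
    have heq : (1 - f₀ (1 - x)) - (1 - f₀ (1 - y)) = f₀ (1 - y) - f₀ (1 - x) := by ring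
    rw [heq]
    have h := hf0bd _ (hmem10 y hy) _ (hmem10 x hx)
    have heq2 : (1:ℝ) - y - (1 - x) = x - y := by ring
    rwa [heq2] at h
  -- ## g₁ facts
  have hg1refl : ∀ t ∈ Icc (0:ℝ) 1, g₁ t = 1 - g₀ (1 - t) := by
    intro t ht
    have h1t : (1:ℝ) - t ∈ Icc (0:ℝ) 1 := ⟨by linarith [ht.2], by linarith [ht.1]⟩
    have hg := hg0mem _ h1t
    have hs : (1:ℝ) - g₀ (1 - t) ∈ Icc (1/2:ℝ) 1 := ⟨by linarith [hg.2], by linarith [hg.1]⟩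
    have hfs : f₁ (1 - g₀ (1 - t)) = t := by
      rw [hf₁]
      have h : (1:ℝ) - (1 - g₀ (1 - t)) = g₀ (1 - t) := by ring
      rw [h, hg₀right _ h1t]; ring
    have h2 := hg₁left _ hs
    rw [hfs] at h2
    exact h2
  have hg1bd : ∀ x ∈ Icc (0:ℝ) 1, ∀ y ∈ Icc (0:ℝ) 1, |g₁ x - g₁ y| ≤ α⁻¹ * |x - y| := by
    intro x hx y hy
    rw [hg1refl x hx, hg1refl y hy]
    have h1x : (1:ℝ) - x ∈ Icc (0:ℝ) 1 := ⟨by linarith [hx.2], by linarith [hx.1]⟩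
    have h1y : (1:ℝ) - y ∈ Icc (0:ℝ) 1 := ⟨by linarith [hy.2], by linarith [hy.1]⟩
    have h := hg0bd _ h1y _ h1x
    have heq : (1 - g₀ (1 - x)) - (1 - g₀ (1 - y)) = g₀ (1 - y) - g₀ (1 - x) := by ring
    rw [heq]
    have heq2 : (1:ℝ) - y - (1 - x) = x - y := by ring
    rwa [heq2] at h
  have hg1cont : ContinuousOn g₁ (Icc (0:ℝ) 1) := by
    refine (LipschitzOnWith.of_dist_le_mul (K := ⟨α⁻¹, hαinv⟩) ?_).continuousOn
    intro x hx y hy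
    rw [Real.dist_eq, Real.dist_eq]
    exact hg1bd x hx y hy
  -- ## inverse-function derivatives
  have hg0d : ∀ x ∈ Ioo (0:ℝ) 1, HasDerivAt g₀ (deriv f₀ (g₀ x))⁻¹ x := by
    intro x hx
    have hxI : x ∈ Icc (0:ℝ) 1 := ⟨hx.1.le, hx.2.le⟩
    have hnhds : Icc (0:ℝ) 1 ∈ nhds x := Icc_mem_nhds hx.1 hx.2
    exact HasDerivAt.of_local_left_inverse (hg0cont.continuousAt hnhds)
      (hd0 _ (hg0mem x hxI)) (ne_of_gt (hposd _ (hg0mem x hxI)))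
      (Filter.eventually_of_mem hnhds (fun y hy => hg₀right y hy))
  have hg1d : ∀ x ∈ Ioo (0:ℝ) 1, HasDerivAt g₁ (deriv f₁ (g₁ x))⁻¹ x := by
    intro x hx
    have hxI : x ∈ Icc (0:ℝ) 1 := ⟨hx.1.le, hx.2.le⟩
    have hnhds : Icc (0:ℝ) 1 ∈ nhds x := Icc_mem_nhds hx.1 hx.2
    have hmem := hg₁maps hxI
    have hfd : HasDerivAt f₁ (deriv f₁ (g₁ x)) (g₁ x) := by
      have h := hd1 _ hmem
      rwa [← hf1deriv _ hmem] at h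
    exact HasDerivAt.of_local_left_inverse (hg1cont.continuousAt hnhds) hfd
      (ne_of_gt (hf1pos _ hmem))
      (Filter.eventually_of_mem hnhds (fun y hy => hg₁right y hy))
  -- ## open-interval mapping facts
  have hf0Ioo : ∀ y ∈ Ioo (0:ℝ) (1/2), f₀ y ∈ Ioo (0:ℝ) 1 := by
    intro y hy
    have hyI : y ∈ Icc (0:ℝ) (1/2) := ⟨hy.1.le, hy.2.le⟩
    have hmem := hf₀maps hyI
    constructor
    · rcases lt_or_eq_of_le hmem.1 with h | h
      · exact h
      · exfalso
        have h2 := hg₀left y hyI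
        rw [← h, hg00] at h2
        exact hy.1.ne' h2.symm
    · rcases lt_or_eq_of_le hmem.2 with h | h
      · exact h
      · exfalso
        have h2 := hg₀left y hyI
        rw [h, hg01] at h2
        exact hy.2.ne h2.symm
  have hf1Ioo : ∀ y ∈ Ioo (1/2:ℝ) 1, f₁ y ∈ Ioo (0:ℝ) 1 := by
    intro y hy
    have hyI : y ∈ Icc (1/2:ℝ) 1 := ⟨hy.1.le, hy.2.le⟩
    have hmem := hf₁maps y hyI
    constructor
    · rcases lt_or_eq_of_le hmem.1 with h | h
      · exact h
      · exfalso
        have h2 := hg₁left y hyI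
        rw [← h, hg10] at h2
        exact hy.1.ne h2
    · rcases lt_or_eq_of_le hmem.2 with h | h
      · exact h
      · exfalso
        have h2 := hg₁left y hyI
        rw [h, hg11] at h2
        exact hy.2.ne h2.symm
  -- ## the null set N
  have hQm : MeasurableSet (Icc (0:ℝ) 1 ×ˢ Icc (0:ℝ) 1) := measurableSet_Icc.prod measurableSet_Icc
  have hBnull : volume ({p : ℝ × ℝ |
      ¬ ((p.2 < 1/2 → ρ p = deriv g₀ p.1 * deriv f₀ p.2 * ρ (g₀ p.1, f₀ p.2)) ∧
         (1/2 ≤ p.2 → ρ p = deriv g₁ p.1 * deriv f₁ p.2 * ρ (g₁ p.1, f₁ p.2)))}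
      ∩ Icc (0:ℝ) 1 ×ˢ Icc (0:ℝ) 1) = 0 := by
    have h := ae_iff.mp hρae
    rwa [Measure.restrict_apply' hQm] at h
  obtain ⟨N, hBN, hNm, hN0⟩ := exists_measurable_superset_of_null hBnull
  have hPN : ∀ p : ℝ × ℝ, p ∈ Icc (0:ℝ) 1 ×ˢ Icc (0:ℝ) 1 → p ∉ N →
      ((p.2 < 1/2 → ρ p = deriv g₀ p.1 * deriv f₀ p.2 * ρ (g₀ p.1, f₀ p.2)) ∧
       (1/2 ≤ p.2 → ρ p = deriv g₁ p.1 * deriv f₁ p.2 * ρ (g₁ p.1, f₁ p.2))) := by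
    intro p hpQ hpN
    by_contra h
    exact hpN (hBN ⟨h, hpQ⟩)
  -- ## clamped globally Lipschitz versions
  have hab0 : (0:ℝ) ≤ 1/2 := by norm_num
  have habh : (1/2:ℝ) ≤ 1 := by norm_num
  have hab01 : (0:ℝ) ≤ 1 := by norm_num
  obtain ⟨F₀, hF₀lip, hF₀eq⟩ : ∃ F : ℝ → ℝ, LipschitzWith ⟨M, hM0⟩ F ∧
      ∀ x ∈ Icc (0:ℝ) (1/2), F x = f₀ x :=
    ⟨_, clamp_lip' hab0 hM0 hf0bd, fun x hx => by simp [projIcc_of_mem hab0 hx]⟩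
  obtain ⟨F₁, hF₁lip, hF₁eq⟩ : ∃ F : ℝ → ℝ, LipschitzWith ⟨M, hM0⟩ F ∧
      ∀ x ∈ Icc (1/2:ℝ) 1, F x = f₁ x :=
    ⟨_, clamp_lip' habh hM0 hf1bd, fun x hx => by simp [projIcc_of_mem habh hx]⟩
  obtain ⟨G₀, hG₀lip, hG₀eq⟩ : ∃ G : ℝ → ℝ, LipschitzWith ⟨α⁻¹, hαinv⟩ G ∧
      ∀ x ∈ Icc (0:ℝ) 1, G x = g₀ x :=
    ⟨_, clamp_lip' hab01 hαinv hg0bd, fun x hx => by simp [projIcc_of_mem hab01 hx]⟩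
  obtain ⟨G₁, hG₁lip, hG₁eq⟩ : ∃ G : ℝ → ℝ, LipschitzWith ⟨α⁻¹, hαinv⟩ G ∧
      ∀ x ∈ Icc (0:ℝ) 1, G x = g₁ x :=
    ⟨_, clamp_lip' hab01 hαinv hg1bd, fun x hx => by simp [projIcc_of_mem hab01 hx]⟩
  have hF₀m : Measurable F₀ := hF₀lip.continuous.measurable
  have hF₁m : Measurable F₁ := hF₁lip.continuous.measurable
  have hG₀m : Measurable G₀ := hG₀lip.continuous.measurable
  have hG₁m : Measurable G₁ := hG₁lip.continuous.measurable
  have hrlip : LipschitzWith 1 (fun x : ℝ => 1 - x) := by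
    refine LipschitzWith.of_dist_le_mul (fun x y => ?_)
    rw [Real.dist_eq, Real.dist_eq, NNReal.coe_one, one_mul]
    have h : (1:ℝ) - x - (1 - y) = y - x := by ring
    rw [h, abs_sub_comm]
  -- ## absolute continuity of the eight pushforwards
  have hacF₀ : (volume.restrict (Icc (0:ℝ) (1/2))).map F₀ ≪ volume :=
    map_restrict_ac' hF₀m hG₀lip measurableSet_Icc (fun x hx => by
      rw [hF₀eq x hx, hG₀eq _ (hf₀maps hx)]; exact hg₀left x hx)
  have hacG₀ : (volume.restrict (Icc (0:ℝ) 1)).map G₀ ≪ volume :=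
    map_restrict_ac' hG₀m hF₀lip measurableSet_Icc (fun x hx => by
      rw [hG₀eq x hx, hF₀eq _ (hg0mem x hx)]; exact hg₀right x hx)
  have hacF₁ : (volume.restrict (Icc (1/2:ℝ) 1)).map F₁ ≪ volume :=
    map_restrict_ac' hF₁m hG₁lip measurableSet_Icc (fun x hx => by
      rw [hF₁eq x hx, hG₁eq _ (hf₁maps x hx)]; exact hg₁left x hx)
  have hacG₁ : (volume.restrict (Icc (0:ℝ) 1)).map G₁ ≪ volume :=
    map_restrict_ac' hG₁m hF₁lip measurableSet_Icc (fun x hx => by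
      rw [hG₁eq x hx, hF₁eq _ (hg₁maps hx)]; exact hg₁right x hx)
  have hacF₀r : (volume.restrict (Icc (0:ℝ) (1/2))).map (fun x => 1 - F₀ x) ≪ volume :=
    map_restrict_ac' (measurable_const.sub hF₀m) (hG₀lip.comp hrlip) measurableSet_Icc
      (fun x hx => by
        show G₀ (1 - (1 - F₀ x)) = x
        rw [sub_sub_cancel, hF₀eq x hx, hG₀eq _ (hf₀maps hx)]; exact hg₀left x hx)
  have hacG₀r : (volume.restrict (Icc (0:ℝ) 1)).map (fun x => 1 - G₀ x) ≪ volume :=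
    map_restrict_ac' (measurable_const.sub hG₀m) (hF₀lip.comp hrlip) measurableSet_Icc
      (fun x hx => by
        show F₀ (1 - (1 - G₀ x)) = x
        rw [sub_sub_cancel, hG₀eq x hx, hF₀eq _ (hg0mem x hx)]; exact hg₀right x hx)
  have hacF₁r : (volume.restrict (Icc (1/2:ℝ) 1)).map (fun x => 1 - F₁ x) ≪ volume :=
    map_restrict_ac' (measurable_const.sub hF₁m) (hG₁lip.comp hrlip) measurableSet_Icc
      (fun x hx => by
        show G₁ (1 - (1 - F₁ x)) = x
        rw [sub_sub_cancel, hF₁eq x hx, hG₁eq _ (hf₁maps x hx)]; exact hg₁left x hx)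
  have hacG₁r : (volume.restrict (Icc (0:ℝ) 1)).map (fun x => 1 - G₁ x) ≪ volume :=
    map_restrict_ac' (measurable_const.sub hG₁m) (hF₁lip.comp hrlip) measurableSet_Icc
      (fun x hx => by
        show F₁ (1 - (1 - G₁ x)) = x
        rw [sub_sub_cancel, hG₁eq x hx, hF₁eq _ (hg₁maps hx)]; exact hg₁right x hx)
  -- ## the four bad sets are null
  have hBad0 := badset_null' hF₀m hG₀m measurableSet_Icc measurableSet_Icc hacF₀ hacG₀ hNm hN0
  have hBad1 := badset_null' hF₁m hG₁m measurableSet_Icc measurableSet_Icc hacF₁ hacG₁ hNm hN0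
  have hBad0r := badset_null' (measurable_const.sub hF₀m) (measurable_const.sub hG₀m)
    measurableSet_Icc measurableSet_Icc hacF₀r hacG₀r hNm hN0
  have hBad1r := badset_null' (measurable_const.sub hF₁m) (measurable_const.sub hG₁m)
    measurableSet_Icc measurableSet_Icc hacF₁r hacG₁r hNm hN0
  -- ## boundary lines
  have hLnull : volume ({p : ℝ × ℝ | p.1 = 0} ∪ {p : ℝ × ℝ | p.1 = 1} ∪ {p : ℝ × ℝ | p.2 = 0}
      ∪ {p : ℝ × ℝ | p.2 = 1/2} ∪ {p : ℝ × ℝ | p.2 = 1}) = 0 := by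
    refine measure_union_null (measure_union_null (measure_union_null (measure_union_null
      (vline_null' 0) (vline_null' 1)) (hline_null' 0)) (hline_null' (1/2))) (hline_null' 1)
  -- ## measure-preserving transformations and integrability
  have hvolswap : (volume : Measure (ℝ × ℝ)).map Prod.swap = volume := by
    rw [Measure.volume_eq_prod]; exact Measure.prod_swap
  have hswQ : (Prod.swap : ℝ × ℝ → ℝ × ℝ) ⁻¹' (Icc (0:ℝ) 1 ×ˢ Icc (0:ℝ) 1)
      = Icc (0:ℝ) 1 ×ˢ Icc (0:ℝ) 1 := Set.preimage_swap_prod _ _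
  have hmpswap : MeasurePreserving (Prod.swap : ℝ × ℝ → ℝ × ℝ)
      ((volume : Measure (ℝ × ℝ)).restrict (Icc (0:ℝ) 1 ×ˢ Icc (0:ℝ) 1))
      (volume.restrict (Icc (0:ℝ) 1 ×ˢ Icc (0:ℝ) 1)) := by
    refine ⟨measurable_swap, ?_⟩
    calc Measure.map Prod.swap (volume.restrict (Icc (0:ℝ) 1 ×ˢ Icc (0:ℝ) 1))
        = Measure.map Prod.swap (volume.restrict
            ((Prod.swap : ℝ × ℝ → ℝ × ℝ) ⁻¹' (Icc (0:ℝ) 1 ×ˢ Icc (0:ℝ) 1))) := by rw [hswQ]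
      _ = ((volume : Measure (ℝ × ℝ)).map Prod.swap).restrict (Icc (0:ℝ) 1 ×ˢ Icc (0:ℝ) 1) :=
          (Measure.restrict_map measurable_swap hQm).symm
      _ = volume.restrict (Icc (0:ℝ) 1 ×ˢ Icc (0:ℝ) 1) := by rw [hvolswap]
  have hintswap : IntegrableOn (fun p : ℝ × ℝ => ρ (p.2, p.1)) (Icc (0:ℝ) 1 ×ˢ Icc (0:ℝ) 1) :=
    (hmpswap.integrable_comp hρint.aestronglyMeasurable).mpr hρint
  have hrmp : MeasurePreserving (fun x : ℝ => 1 - x) volume volume :=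
    Measure.measurePreserving_sub_left volume 1
  have hRmp : MeasurePreserving (fun p : ℝ × ℝ => ((1:ℝ) - p.2, (1:ℝ) - p.1)) volume volume := by
    have hp : MeasurePreserving (Prod.map (fun x : ℝ => 1 - x) (fun x : ℝ => 1 - x))
        (volume.prod volume) (volume.prod volume) := hrmp.prod hrmp
    rw [← Measure.volume_eq_prod] at hp
    exact hp.comp (⟨measurable_swap, hvolswap⟩ : MeasurePreserving Prod.swap volume volume)
  have hRQ : (fun p : ℝ × ℝ => ((1:ℝ) - p.2, (1:ℝ) - p.1)) ⁻¹' (Icc (0:ℝ) 1 ×ˢ Icc (0:ℝ) 1)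
      = Icc (0:ℝ) 1 ×ˢ Icc (0:ℝ) 1 := by
    ext p
    simp only [Set.mem_preimage, Set.mem_prod, Set.mem_Icc]
    constructor
    · rintro ⟨⟨h1, h2⟩, h3, h4⟩
      exact ⟨⟨by linarith, by linarith⟩, by linarith, by linarith⟩
    · rintro ⟨⟨h1, h2⟩, h3, h4⟩
      exact ⟨⟨by linarith, by linarith⟩, by linarith, by linarith⟩
  have hmpR : MeasurePreserving (fun p : ℝ × ℝ => ((1:ℝ) - p.2, (1:ℝ) - p.1))
      ((volume : Measure (ℝ × ℝ)).restrict (Icc (0:ℝ) 1 ×ˢ Icc (0:ℝ) 1))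
      (volume.restrict (Icc (0:ℝ) 1 ×ˢ Icc (0:ℝ) 1)) := by
    refine ⟨hRmp.measurable, ?_⟩
    calc Measure.map (fun p : ℝ × ℝ => ((1:ℝ) - p.2, (1:ℝ) - p.1))
          (volume.restrict (Icc (0:ℝ) 1 ×ˢ Icc (0:ℝ) 1))
        = Measure.map (fun p : ℝ × ℝ => ((1:ℝ) - p.2, (1:ℝ) - p.1)) (volume.restrict
            ((fun p : ℝ × ℝ => ((1:ℝ) - p.2, (1:ℝ) - p.1)) ⁻¹' (Icc (0:ℝ) 1 ×ˢ Icc (0:ℝ) 1))) := by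
          rw [hRQ]
      _ = ((volume : Measure (ℝ × ℝ)).map (fun p : ℝ × ℝ => ((1:ℝ) - p.2, (1:ℝ) - p.1))).restrict
            (Icc (0:ℝ) 1 ×ˢ Icc (0:ℝ) 1) := (Measure.restrict_map hRmp.measurable hQm).symm
      _ = volume.restrict (Icc (0:ℝ) 1 ×ˢ Icc (0:ℝ) 1) := by rw [hRmp.map_eq]
  have hintR : IntegrableOn (fun p : ℝ × ℝ => ρ ((1:ℝ) - p.2, (1:ℝ) - p.1))
      (Icc (0:ℝ) 1 ×ˢ Icc (0:ℝ) 1) :=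
    (hmpR.integrable_comp hρint.aestronglyMeasurable).mpr hρint
  -- ## assembling the result
  refine ⟨⟨fun p hp => hρpos (p.2, p.1) ⟨hp.2, hp.1⟩, hintswap, ?_⟩,
    ⟨fun p hp => by
      have h1 : p.1 ∈ Icc (0:ℝ) 1 := hp.1
      have h2 : p.2 ∈ Icc (0:ℝ) 1 := hp.2
      refine hρpos ((1:ℝ) - p.2, (1:ℝ) - p.1) ⟨?_, ?_⟩
      · show (1:ℝ) - p.2 ∈ Icc (0:ℝ) 1
        exact ⟨by linarith [h2.2], by linarith [h2.1]⟩
      · show (1:ℝ) - p.1 ∈ Icc (0:ℝ) 1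
        exact ⟨by linarith [h1.2], by linarith [h1.1]⟩, hintR, ?_⟩⟩
  · -- a.e. identity for the swapped density
    rw [ae_iff, Measure.restrict_apply' hQm]
    refine measure_mono_null ?_ (measure_union_null (measure_union_null hBad0 hBad1) hLnull)
    intro p hp
    by_contra hU
    simp only [Set.mem_union, not_or] at hU
    obtain ⟨⟨hU0, hU1⟩, hUL⟩ := hU
    simp only [Set.mem_union, Set.mem_setOf_eq, not_or] at hUL
    obtain ⟨⟨⟨⟨hx0, hx1⟩, hy0⟩, hyh⟩, hy1⟩ := hUL
    obtain ⟨hnP, hpQ⟩ := hp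
    obtain ⟨hpx, hpy⟩ := hpQ
    refine hnP ⟨?_, ?_⟩
    · intro hlt
      have hx01 : p.1 ∈ Ioo (0:ℝ) 1 :=
        ⟨lt_of_le_of_ne hpx.1 (Ne.symm hx0), lt_of_le_of_ne hpx.2 hx1⟩
      have hy2 : p.2 ∈ Icc (0:ℝ) (1/2) := ⟨hpy.1, hlt.le⟩
      have hyIoo : p.2 ∈ Ioo (0:ℝ) (1/2) := ⟨lt_of_le_of_ne hpy.1 (Ne.symm hy0), hlt⟩
      have hgm := hg0mem p.1 hpx
      have hfm := hf₀maps hy2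
      have hqN : (f₀ p.2, g₀ p.1) ∉ N := by
        intro hq
        refine hU0 ⟨?_, ⟨hpx, hy2⟩⟩
        show (F₀ p.2, G₀ p.1) ∈ N
        rw [hF₀eq p.2 hy2, hG₀eq p.1 hpx]
        exact hq
      have hqQ : (f₀ p.2, g₀ p.1) ∈ Icc (0:ℝ) 1 ×ˢ Icc (0:ℝ) 1 :=
        ⟨hfm, ⟨hgm.1, le_trans hgm.2 (by norm_num)⟩⟩
      have hg0lt : g₀ p.1 < 1/2 := by
        rcases lt_or_eq_of_le hgm.2 with h | h
        · exact h
        · exfalso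
          have h2 := hg₀right p.1 hpx
          rw [h, hf₀half] at h2
          exact hx1 h2.symm
      have heq : ρ (f₀ p.2, g₀ p.1) = deriv g₀ (f₀ p.2) * deriv f₀ (g₀ p.1)
          * ρ (g₀ (f₀ p.2), f₀ (g₀ p.1)) := (hPN _ hqQ hqN).1 hg0lt
      rw [hg₀left p.2 hy2, hg₀right p.1 hpx] at heq
      have hdq := (hg0d _ (hf0Ioo p.2 hyIoo)).deriv
      rw [hg₀left p.2 hy2] at hdq
      have hdp := (hg0d p.1 hx01).deriv
      have ha : deriv f₀ p.2 ≠ 0 := ne_of_gt (hposd _ hy2)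
      have hb : deriv f₀ (g₀ p.1) ≠ 0 := ne_of_gt (hposd _ hgm)
      show ρ (p.2, p.1) = deriv g₀ p.1 * deriv f₀ p.2 * ρ (f₀ p.2, g₀ p.1)
      rw [heq, hdp, hdq]
      exact cancel_aux' _ ha hb
    · intro hge
      have hgt : 1/2 < p.2 := lt_of_le_of_ne hge (Ne.symm hyh)
      have hx01 : p.1 ∈ Ioo (0:ℝ) 1 :=
        ⟨lt_of_le_of_ne hpx.1 (Ne.symm hx0), lt_of_le_of_ne hpx.2 hx1⟩
      have hy2 : p.2 ∈ Icc (1/2:ℝ) 1 := ⟨hge, hpy.2⟩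
      have hyIoo : p.2 ∈ Ioo (1/2:ℝ) 1 := ⟨hgt, lt_of_le_of_ne hpy.2 hy1⟩
      have hgm := hg₁maps hpx
      have hfm := hf₁maps p.2 hy2
      have hqN : (f₁ p.2, g₁ p.1) ∉ N := by
        intro hq
        refine hU1 ⟨?_, ⟨hpx, hy2⟩⟩
        show (F₁ p.2, G₁ p.1) ∈ N
        rw [hF₁eq p.2 hy2, hG₁eq p.1 hpx]
        exact hq
      have hqQ : (f₁ p.2, g₁ p.1) ∈ Icc (0:ℝ) 1 ×ˢ Icc (0:ℝ) 1 :=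
        ⟨hfm, ⟨le_trans (by norm_num) hgm.1, hgm.2⟩⟩
      have heq : ρ (f₁ p.2, g₁ p.1) = deriv g₁ (f₁ p.2) * deriv f₁ (g₁ p.1)
          * ρ (g₁ (f₁ p.2), f₁ (g₁ p.1)) := (hPN _ hqQ hqN).2 hgm.1
      rw [hg₁left p.2 hy2, hg₁right p.1 hpx] at heq
      have hdq := (hg1d _ (hf1Ioo p.2 hyIoo)).deriv
      rw [hg₁left p.2 hy2] at hdq
      have hdp := (hg1d p.1 hx01).deriv
      have ha : deriv f₁ p.2 ≠ 0 := ne_of_gt (hf1pos _ hy2)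
      have hb : deriv f₁ (g₁ p.1) ≠ 0 := ne_of_gt (hf1pos _ hgm)
      show ρ (p.2, p.1) = deriv g₁ p.1 * deriv f₁ p.2 * ρ (f₁ p.2, g₁ p.1)
      rw [heq, hdp, hdq]
      exact cancel_aux' _ ha hb
  · -- a.e. identity for the reflected density
    rw [ae_iff, Measure.restrict_apply' hQm]
    refine measure_mono_null ?_ (measure_union_null (measure_union_null hBad0r hBad1r) hLnull)
    intro p hp
    by_contra hU
    simp only [Set.mem_union, not_or] at hU
    obtain ⟨⟨hU0, hU1⟩, hUL⟩ := hU
    simp only [Set.mem_union, Set.mem_setOf_eq, not_or] at hUL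
    obtain ⟨⟨⟨⟨hx0, hx1⟩, hy0⟩, hyh⟩, hy1⟩ := hUL
    obtain ⟨hnP, hpQ⟩ := hp
    obtain ⟨hpx, hpy⟩ := hpQ
    refine hnP ⟨?_, ?_⟩
    · intro hlt
      have hx01 : p.1 ∈ Ioo (0:ℝ) 1 :=
        ⟨lt_of_le_of_ne hpx.1 (Ne.symm hx0), lt_of_le_of_ne hpx.2 hx1⟩
      have hy2 : p.2 ∈ Icc (0:ℝ) (1/2) := ⟨hpy.1, hlt.le⟩
      have hyIoo : p.2 ∈ Ioo (0:ℝ) (1/2) := ⟨lt_of_le_of_ne hpy.1 (Ne.symm hy0), hlt⟩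
      have hgm := hg0mem p.1 hpx
      have hfm := hf₀maps hy2
      have hwN : ((1:ℝ) - f₀ p.2, (1:ℝ) - g₀ p.1) ∉ N := by
        intro hq
        refine hU0 ⟨?_, ⟨hpx, hy2⟩⟩
        show ((1:ℝ) - F₀ p.2, (1:ℝ) - G₀ p.1) ∈ N
        rw [hF₀eq p.2 hy2, hG₀eq p.1 hpx]
        exact hq
      have hwQ1 : (1:ℝ) - f₀ p.2 ∈ Icc (0:ℝ) 1 := ⟨by linarith [hfm.2], by linarith [hfm.1]⟩
      have hwQ2 : (1:ℝ) - g₀ p.1 ∈ Icc (0:ℝ) 1 := ⟨by linarith [hgm.2], by linarith [hgm.1]⟩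
      have hwQ : ((1:ℝ) - f₀ p.2, (1:ℝ) - g₀ p.1) ∈ Icc (0:ℝ) 1 ×ˢ Icc (0:ℝ) 1 := ⟨hwQ1, hwQ2⟩
      have hw2 : (1:ℝ)/2 ≤ 1 - g₀ p.1 := by linarith [hgm.2]
      have heq : ρ ((1:ℝ) - f₀ p.2, (1:ℝ) - g₀ p.1)
          = deriv g₁ (1 - f₀ p.2) * deriv f₁ (1 - g₀ p.1)
            * ρ (g₁ (1 - f₀ p.2), f₁ (1 - g₀ p.1)) := (hPN _ hwQ hwN).2 hw2
      have hwm1 : (1:ℝ) - f₀ p.2 ∈ Icc (0:ℝ) 1 := ⟨by linarith [hfm.2], by linarith [hfm.1]⟩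
      have hA : g₁ (1 - f₀ p.2) = 1 - p.2 := by
        rw [hg1refl _ hwm1]
        have h : (1:ℝ) - (1 - f₀ p.2) = f₀ p.2 := by ring
        rw [h, hg₀left p.2 hy2]
      have hB : f₁ (1 - g₀ p.1) = 1 - p.1 := by
        rw [hf₁]
        have h : (1:ℝ) - (1 - g₀ p.1) = g₀ p.1 := by ring
        rw [h, hg₀right p.1 hpx]
      rw [hA, hB] at heq
      have hC : deriv f₁ (1 - g₀ p.1) = deriv f₀ (g₀ p.1) := by
        have h := hf1deriv (1 - g₀ p.1) ⟨by linarith [hgm.2], by linarith [hgm.1]⟩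
        rwa [sub_sub_cancel] at h
      have hD : deriv g₁ (1 - f₀ p.2) = (deriv f₀ p.2)⁻¹ := by
        have hfIoo := hf0Ioo p.2 hyIoo
        have h := (hg1d (1 - f₀ p.2)
          ⟨by linarith [hfIoo.2], by linarith [hfIoo.1]⟩).deriv
        rw [hA] at h
        rw [h]
        congr 1
        have h2 := hf1deriv (1 - p.2) ⟨by linarith [hyIoo.2], by linarith [hyIoo.1]⟩
        rw [h2, sub_sub_cancel]
      rw [hC, hD] at heq
      have hdp := (hg0d p.1 hx01).deriv
      have ha : deriv f₀ p.2 ≠ 0 := ne_of_gt (hposd _ hy2)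
      have hb : deriv f₀ (g₀ p.1) ≠ 0 := ne_of_gt (hposd _ hgm)
      show ρ ((1:ℝ) - p.2, (1:ℝ) - p.1) = deriv g₀ p.1 * deriv f₀ p.2
          * ρ ((1:ℝ) - f₀ p.2, (1:ℝ) - g₀ p.1)
      rw [heq, hdp]
      exact cancel_aux' _ ha hb
    · intro hge
      have hgt : 1/2 < p.2 := lt_of_le_of_ne hge (Ne.symm hyh)
      have hx01 : p.1 ∈ Ioo (0:ℝ) 1 :=
        ⟨lt_of_le_of_ne hpx.1 (Ne.symm hx0), lt_of_le_of_ne hpx.2 hx1⟩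
      have hy2 : p.2 ∈ Icc (1/2:ℝ) 1 := ⟨hge, hpy.2⟩
      have hyIoo : p.2 ∈ Ioo (1/2:ℝ) 1 := ⟨hgt, lt_of_le_of_ne hpy.2 hy1⟩
      have hgm := hg₁maps hpx
      have hfm := hf₁maps p.2 hy2
      have hwN : ((1:ℝ) - f₁ p.2, (1:ℝ) - g₁ p.1) ∉ N := by
        intro hq
        refine hU1 ⟨?_, ⟨hpx, hy2⟩⟩
        show ((1:ℝ) - F₁ p.2, (1:ℝ) - G₁ p.1) ∈ N
        rw [hF₁eq p.2 hy2, hG₁eq p.1 hpx]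
        exact hq
      have hwQ1 : (1:ℝ) - f₁ p.2 ∈ Icc (0:ℝ) 1 := ⟨by linarith [hfm.2], by linarith [hfm.1]⟩
      have hwQ2 : (1:ℝ) - g₁ p.1 ∈ Icc (0:ℝ) 1 := ⟨by linarith [hgm.2], by linarith [hgm.1]⟩
      have hwQ : ((1:ℝ) - f₁ p.2, (1:ℝ) - g₁ p.1) ∈ Icc (0:ℝ) 1 ×ˢ Icc (0:ℝ) 1 := ⟨hwQ1, hwQ2⟩
      have hg1gt : 1/2 < g₁ p.1 := by
        rcases lt_or_eq_of_le hgm.1 with h | h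
        · exact h
        · exfalso
          have h2 := hg₁right p.1 hpx
          rw [← h, hf1half] at h2
          exact hx0 h2.symm
      have hw2 : (1:ℝ) - g₁ p.1 < 1/2 := by linarith
      have heq : ρ ((1:ℝ) - f₁ p.2, (1:ℝ) - g₁ p.1)
          = deriv g₀ (1 - f₁ p.2) * deriv f₀ (1 - g₁ p.1)
            * ρ (g₀ (1 - f₁ p.2), f₀ (1 - g₁ p.1)) := (hPN _ hwQ hwN).1 hw2
      have hmem12 : (1:ℝ) - p.2 ∈ Icc (0:ℝ) (1/2) := ⟨by linarith [hpy.2], by linarith⟩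
      have hmem11 : (1:ℝ) - p.1 ∈ Icc (0:ℝ) 1 := ⟨by linarith [hpx.2], by linarith [hpx.1]⟩
      have hE : (1:ℝ) - f₁ p.2 = f₀ (1 - p.2) := by rw [hf₁]; ring
      have hF : (1:ℝ) - g₁ p.1 = g₀ (1 - p.1) := by rw [hg1refl p.1 hpx]; ring
      rw [hE, hF, hg₀left _ hmem12, hg₀right _ hmem11] at heq
      have hyIoo2 : (1:ℝ) - p.2 ∈ Ioo (0:ℝ) (1/2) := ⟨by linarith [hyIoo.2], by linarith⟩
      have hdq := (hg0d _ (hf0Ioo _ hyIoo2)).deriv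
      rw [hg₀left _ hmem12] at hdq
      have hdp := (hg1d p.1 hx01).deriv
      rw [hf1deriv _ hgm, hF] at hdp
      have hdf1 : deriv f₁ p.2 = deriv f₀ (1 - p.2) := hf1deriv p.2 hy2
      have ha : deriv f₀ (1 - p.2) ≠ 0 := ne_of_gt (hposd _ hmem12)
      have hb : deriv f₀ (g₀ (1 - p.1)) ≠ 0 := ne_of_gt (hposd _ (hg0mem _ hmem11))
      show ρ ((1:ℝ) - p.2, (1:ℝ) - p.1) = deriv g₁ p.1 * deriv f₁ p.2
          * ρ ((1:ℝ) - f₁ p.2, (1:ℝ) - g₁ p.1)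
      rw [hE, hF, heq, hdq, hdp, hdf1]
      exact cancel_aux' _ ha hb
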